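/- Let α_1, α_2, … be a nonnegative summable sequence of reals and let σ_k denote the k-th elementary symmetric function of the α_j (defined as the sum over all k-element subsets of the products, which converges since Σα_j < ∞). Then the sequence (k! · σ_k)_{k≥0} is log-concave: (k! σ_k)^2 ≥ (k-1)! σ_{k-1} · (k+1)! σ_{k+1} for all k ≥ 1. -/
import Mathlib

open scoped BigOperators
open Filter Topology

/-- Truncated elementary symmetric function. -/
noncomputable def Esym (α : ℕ → ℝ) (s : Finset ℕ) (k : ℕ) : ℝ :=
  ∑ t ∈ s.powersetCard k, ∏ i ∈ t, α i

lemma Esym_zero (α : ℕ → ℝ) (s : Finset ℕ) : Esym α s 0 = 1 := by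
  simp [Esym]

lemma Esym_nonneg {α : ℕ → ℝ} (hα : ∀ j, 0 ≤ α j) (s : Finset ℕ) (k : ℕ) :
    0 ≤ Esym α s k :=
  Finset.sum_nonneg fun t _ => Finset.prod_nonneg fun i _ => hα i

lemma Esym_empty_succ (α : ℕ → ℝ) (k : ℕ) : Esym α ∅ (k + 1) = 0 := by
  unfold Esym
  rw [Finset.powersetCard_eq_empty.2 (by simp)]
  simp

lemma Esym_insert (α : ℕ → ℝ) {a : ℕ} {s : Finset ℕ} (ha : a ∉ s) (k : ℕ) :
    Esym α (insert a s) (k + 1) = Esym α s (k + 1) + α a * Esym α s k := by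
  classical
  unfold Esym
  rw [Finset.powersetCard_succ_insert ha, Finset.sum_union, Finset.sum_image, Finset.mul_sum]
  · congr 1
    refine Finset.sum_congr rfl fun t ht => ?_
    have hat : a ∉ t := fun h => ha ((Finset.mem_powersetCard.1 ht).1 h)
    rw [Finset.prod_insert hat]
  · intro t ht t' ht' h
    have hat : a ∉ t := fun h' => ha ((Finset.mem_powersetCard.1 ht).1 h')
    have hat' : a ∉ t' := fun h' => ha ((Finset.mem_powersetCard.1 ht').1 h')
    rw [← Finset.erase_insert hat, ← Finset.erase_insert hat', h]
  · rw [Finset.disjoint_left]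
    intro t ht ht'
    have hat : a ∉ t := fun h' => ha ((Finset.mem_powersetCard.1 ht).1 h')
    obtain ⟨u, _, rfl⟩ := Finset.mem_image.1 ht'
    exact hat (Finset.mem_insert_self _ _)

lemma Esym_succ_eq_zero {α : ℕ → ℝ} (hα : ∀ j, 0 ≤ α j) {s : Finset ℕ} {k : ℕ}
    (h : Esym α s k = 0) : Esym α s (k + 1) = 0 := by
  classical
  unfold Esym at h ⊢
  have hterm : ∀ t ∈ s.powersetCard k, ∏ i ∈ t, α i = 0 :=
    (Finset.sum_eq_zero_iff_of_nonneg
      (fun t _ => Finset.prod_nonneg fun i _ => hα i)).1 h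
  refine Finset.sum_eq_zero fun t ht => ?_
  obtain ⟨hts, htc⟩ := Finset.mem_powersetCard.1 ht
  obtain ⟨x, hx⟩ : t.Nonempty := Finset.card_pos.1 (by omega)
  have h1 : t.erase x ∈ s.powersetCard k :=
    Finset.mem_powersetCard.2 ⟨(Finset.erase_subset _ _).trans hts,
      by rw [Finset.card_erase_of_mem hx, htc]; omega⟩
  rw [← Finset.insert_erase hx, Finset.prod_insert (Finset.notMem_erase _ _),
    hterm _ h1, mul_zero]

/-- The cross inequality. -/
lemma Esym_cross {α : ℕ → ℝ} (hα : ∀ j, 0 ≤ α j) (s : Finset ℕ) (m : ℕ)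
    (h1 : ((m : ℝ) + 2) * Esym α s m * Esym α s (m + 2)
        ≤ ((m : ℝ) + 1) * Esym α s (m + 1) ^ 2)
    (h2 : ((m : ℝ) + 3) * Esym α s (m + 1) * Esym α s (m + 3)
        ≤ ((m : ℝ) + 2) * Esym α s (m + 2) ^ 2) :
    ((m : ℝ) + 3) * Esym α s m * Esym α s (m + 3)
      ≤ ((m : ℝ) + 1) * (Esym α s (m + 1) * Esym α s (m + 2)) := by
  rcases eq_or_lt_of_le (Esym_nonneg hα s (m + 1)) with hz1 | hp1
  · have z2 : Esym α s (m + 2) = 0 := by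
      have := Esym_succ_eq_zero hα hz1.symm; simpa using this
    have z3 : Esym α s (m + 3) = 0 := by
      have := Esym_succ_eq_zero hα z2; simpa using this
    simp [z3, ← hz1]
  rcases eq_or_lt_of_le (Esym_nonneg hα s (m + 2)) with hz2 | hp2
  · have z3 : Esym α s (m + 3) = 0 := by
      have := Esym_succ_eq_zero hα hz2.symm; simpa using this
    simp [z3, ← hz2]
  have hpos : 0 < Esym α s (m + 1) * Esym α s (m + 2) := mul_pos hp1 hp2
  apply le_of_mul_le_mul_right _ hpos
  have hprod := mul_le_mul h1 h2
    (mul_nonneg (mul_nonneg (by positivity) (Esym_nonneg hα s (m+1))) (Esym_nonneg hα s (m+3)))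
    (mul_nonneg (by positivity) (sq_nonneg _))
  nlinarith [hprod, Esym_nonneg hα s m, Esym_nonneg hα s (m+1), Esym_nonneg hα s (m+2),
    Esym_nonneg hα s (m+3)]

/-- Finite Newton-type inequality. -/
lemma Esym_newton {α : ℕ → ℝ} (hα : ∀ j, 0 ≤ α j) (s : Finset ℕ) :
    ∀ k : ℕ, ((k : ℝ) + 2) * Esym α s k * Esym α s (k + 2)
      ≤ ((k : ℝ) + 1) * Esym α s (k + 1) ^ 2 := by
  classical
  induction s using Finset.induction_on with
  | empty =>
    intro k
    have h2 : Esym α ∅ (k + 2) = 0 := Esym_empty_succ α (k + 1)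
    rw [h2, mul_zero]
    positivity
  | @insert a s ha ih =>
    intro k
    have hx : 0 ≤ α a := hα a
    match k with
    | 0 =>
      rw [Esym_insert α ha 1, Esym_insert α ha 0, Esym_zero, Esym_zero]
      have h0 := ih 0
      rw [Esym_zero] at h0
      norm_num at h0 ⊢
      nlinarith [sq_nonneg (α a), Esym_nonneg hα s 1, Esym_nonneg hα s 2]
    | (m+1) =>
      have h1 := ih m
      have h2 := ih (m + 1)
      simp only [show m + 1 + 2 = m + 3 from rfl, show m + 1 + 1 = m + 2 from rfl] at h2 ⊢
      push_cast at h2 ⊢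
      have hB' : Esym α s m * Esym α s (m + 2) ≤ Esym α s (m + 1) ^ 2 := by
        nlinarith [h1, sq_nonneg (Esym α s (m+1)), Nat.cast_nonneg (α := ℝ) m]
      have hB : ((m : ℝ) + 3) * Esym α s m * Esym α s (m + 2)
          ≤ ((m : ℝ) + 2) * Esym α s (m + 1) ^ 2 := by nlinarith [h1, hB']
      have hC := Esym_cross hα s m h1 (by linarith [h2])
      rw [Esym_insert α ha (m + 1), Esym_insert α ha (m + 2), Esym_insert α ha m]
      have hxC := mul_le_mul_of_nonneg_left hC hx
      have hxxB := mul_le_mul_of_nonneg_left hB (mul_nonneg hx hx)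
      nlinarith [h2, hxC, hxxB, mul_nonneg hx (Esym_nonneg hα s (m+1)),
        mul_nonneg hx (Esym_nonneg hα s (m+2))]

lemma Esym_tendsto (α : ℕ → ℝ) (σ : ℕ → ℝ)
    (hσsum : ∀ k : ℕ, Summable (fun s : {s : Finset ℕ // s.card = k} => ∏ i ∈ s.1, α i))
    (hσ : ∀ k : ℕ, σ k = ∑' s : {s : Finset ℕ // s.card = k}, ∏ i ∈ s.1, α i)
    (k : ℕ) :
    Tendsto (fun s : Finset ℕ => Esym α s k) atTop (𝓝 (σ k)) := by
  classical
  have hs : HasSum (fun s : {s : Finset ℕ // s.card = k} => ∏ i ∈ s.1, α i) (σ k) := by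
    rw [hσ k]; exact (hσsum k).hasSum
  set A : Finset ℕ → Finset {s : Finset ℕ // s.card = k} :=
    fun s => (s.powersetCard k).subtype (fun t => t.card = k) with hAdef
  have hA : Tendsto A atTop atTop := by
    apply tendsto_atTop_finset_of_monotone
    · intro s t hst
      exact Finset.subtype_mono (Finset.powersetCard_mono hst)
    · intro x
      refine ⟨x.1, ?_⟩
      simp only [hAdef, Finset.mem_subtype, Finset.mem_powersetCard]
      exact ⟨Finset.Subset.refl _, x.2⟩
  have hcomp : Tendsto (fun s : Finset ℕ =>
      ∑ b ∈ A s, ∏ i ∈ b.1, α i) atTop (𝓝 (σ k)) :=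
    (hs : Tendsto _ atTop (𝓝 (σ k))).comp hA
  refine hcomp.congr fun s => ?_
  simp only [hAdef]
  exact Finset.sum_subtype_of_mem (fun t => ∏ i ∈ t, α i)
    (fun t ht => (Finset.mem_powersetCard.1 ht).2)

theorem stmt1 (α : ℕ → ℝ) (hnonneg : ∀ j, 0 ≤ α j) (hsum : Summable α)
    (σ : ℕ → ℝ)
    (hσsum : ∀ k : ℕ, Summable (fun s : {s : Finset ℕ // s.card = k} => ∏ i ∈ s.1, α i))
    (hσ : ∀ k : ℕ, σ k = ∑' s : {s : Finset ℕ // s.card = k}, ∏ i ∈ s.1, α i) :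
    ∀ k : ℕ, 1 ≤ k →
      ((k - 1).factorial : ℝ) * σ (k - 1) * (((k + 1).factorial : ℝ) * σ (k + 1)) ≤
        ((k.factorial : ℝ) * σ k) ^ 2 := by
  intro k hk
  obtain ⟨m, rfl⟩ : ∃ m, k = m + 1 := ⟨k - 1, by omega⟩
  have hT := Esym_tendsto α σ hσsum hσ
  have key : ((m : ℝ) + 2) * σ m * σ (m + 2) ≤ ((m : ℝ) + 1) * σ (m + 1) ^ 2 := by
    refine le_of_tendsto_of_tendsto'
      (((tendsto_const_nhds.mul (hT m)).mul (hT (m + 2))))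
      (tendsto_const_nhds.mul ((hT (m + 1)).pow 2))
      (fun s => Esym_newton hnonneg s m)
  simp only [Nat.add_sub_cancel]
  have hm1 : (m + 1) + 1 = m + 2 := rfl
  rw [hm1]
  have hfac1 : ((m + 1).factorial : ℝ) = ((m : ℝ) + 1) * (m.factorial : ℝ) := by
    push_cast [Nat.factorial_succ]; ring
  have hfac2 : ((m + 2).factorial : ℝ)
      = ((m : ℝ) + 2) * (((m : ℝ) + 1) * (m.factorial : ℝ)) := by
    rw [show m + 2 = (m + 1) + 1 from rfl]
    push_cast [Nat.factorial_succ]; ring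
  have hF : (0 : ℝ) < (m.factorial : ℝ) := by exact_mod_cast m.factorial_pos
  rw [hfac1, hfac2]
  nlinarith [mul_le_mul_of_nonneg_left key
    (by positivity : (0:ℝ) ≤ ((m : ℝ) + 1) * (m.factorial : ℝ) ^ 2)]
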